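/- Let (Ω, Σ, μ) be a measure space, ρ ≥ 0 a μ-measurable weight, and (f_i)_{i∈I} an orthonormal family in L²_ρ(Ω, 𝕂). Let F be a finite subset of I, φ_i, Φ_i, γ_i, Γ_i ∈ 𝕂 for i ∈ F, and f, g ∈ L²_ρ(Ω, 𝕂) such that ∫_Ω ρ(s) Re[(Σ_{i∈F} Φ_i f_i(s) − f(s))(\overline{f(s)} − Σ_{i∈F} \overline{φ_i} \overline{f_i(s)})] dμ(s) ≥ 0 and ∫_Ω ρ(s) Re[(Σ_{i∈F} Γ_i f_i(s) − g(s))(\overline{g(s)} − Σ_{i∈F} \overline{γ_i} \overline{f_i(s)})] dμ(s) ≥ 0. Then |∫_Ω ρ f \overline{g} dμ − Σ_{i∈F} (∫_Ω ρ f \overline{f_i} dμ)(∫_Ω ρ f_i \overline{g} dμ)| ≤ (1/4)(Σ_{i∈F} |Φ_i − φ_i|²)^{1/2}(Σ_{i∈F} |Γ_i − γ_i|²)^{1/2} − Σ_{i∈F} |(Φ_i + φ_i)/2 − ∫_Ω ρ f \overline{f_i} dμ| · |(Γ_i + γ_i)/2 − ∫_Ω ρ g \overline{f_i} dμ| ≤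 (1/4)(Σ_{i∈F} |Φ_i − φ_i|²)^{1/2}(Σ_{i∈F} |Γ_i − γ_i|²)^{1/2}. -/

import Mathlib

open RCLike Finset MeasureTheory

variable {𝕂 Ω I : Type*} [RCLike 𝕂] [MeasurableSpace Ω] [DecidableEq I]
open RCLike Finset

local notation "⟪" x ", " y "⟫" => @inner _ _ _ x y

lemma scalar_id {𝕂 : Type*} [RCLike 𝕂] (P p a : 𝕂) :
    re (P * (starRingEnd 𝕂) a) + re ((starRingEnd 𝕂) p * a) - re ((starRingEnd 𝕂) p * P) - ‖a‖ ^ 2 =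
      (1 / 4) * ‖P - p‖ ^ 2 - ‖(P + p) / 2 - a‖ ^ 2 := by
  have h2 : (P + p) / 2 - a = (P + p - 2 * a) / 2 := by ring
  have hn2 : ‖(2:𝕂)‖ = 2 := by simpa using RCLike.norm_ofNat (K := 𝕂) 2
  rw [h2, norm_div, hn2, div_pow]
  simp only [← RCLike.normSq_eq_def', RCLike.normSq_apply, RCLike.mul_re, RCLike.mul_im,
    RCLike.conj_re, RCLike.conj_im, map_sub, map_add, map_mul, RCLike.ofNat_re, RCLike.ofNat_im]
  ring

lemma sqrt_step {A B C D : ℝ} (hA0 : 0 ≤ A) (hB0 : 0 ≤ B) (hC0 : 0 ≤ C) (hD0 : 0 ≤ D)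
    (hBA : B ≤ A) (hDC : D ≤ C) :
    Real.sqrt (A - B) * Real.sqrt (C - D) ≤ Real.sqrt A * Real.sqrt C -
      Real.sqrt B * Real.sqrt D := by
  have sA := Real.sq_sqrt hA0
  have sB := Real.sq_sqrt hB0
  have sC := Real.sq_sqrt hC0
  have sD := Real.sq_sqrt hD0
  have h0 : 0 ≤ Real.sqrt A * Real.sqrt C - Real.sqrt B * Real.sqrt D := by
    have := mul_le_mul (Real.sqrt_le_sqrt hBA) (Real.sqrt_le_sqrt hDC)
      (Real.sqrt_nonneg D) (Real.sqrt_nonneg A)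
    linarith
  have h1' : (A - B) * (C - D) ≤ (Real.sqrt A * Real.sqrt C - Real.sqrt B * Real.sqrt D) ^ 2 := by
    nlinarith [sq_nonneg (Real.sqrt A * Real.sqrt D - Real.sqrt B * Real.sqrt C),
      Real.sqrt_nonneg A, Real.sqrt_nonneg B, Real.sqrt_nonneg C, Real.sqrt_nonneg D]
  calc Real.sqrt (A - B) * Real.sqrt (C - D) = Real.sqrt ((A - B) * (C - D)) :=
        (Real.sqrt_mul (by linarith) _).symm
    _ ≤ Real.sqrt ((Real.sqrt A * Real.sqrt C - Real.sqrt B * Real.sqrt D) ^ 2) :=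
        Real.sqrt_le_sqrt h1'
    _ = Real.sqrt A * Real.sqrt C - Real.sqrt B * Real.sqrt D := Real.sqrt_sq h0

lemma gruss_abstract {𝕂 E I : Type*} [RCLike 𝕂] [NormedAddCommGroup E]
    [InnerProductSpace 𝕂 E] [DecidableEq I]
    (F : Finset I) (e : I → E)
    (he : ∀ i ∈ F, ∀ j ∈ F, (⟪e i, e j⟫ : 𝕂) = if i = j then 1 else 0)
    (x y : E) (φ Φ γ Γ : I → 𝕂)
    (hx : 0 ≤ re (⟪x - ∑ i ∈ F, φ i • e i, (∑ i ∈ F, Φ i • e i) - x⟫ : 𝕂))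
    (hy : 0 ≤ re (⟪y - ∑ i ∈ F, γ i • e i, (∑ i ∈ F, Γ i • e i) - y⟫ : 𝕂)) :
    ‖(⟪y, x⟫ : 𝕂) - ∑ i ∈ F, (⟪e i, x⟫ : 𝕂) * (⟪y, e i⟫ : 𝕂)‖ ≤
      (1 / 4) * Real.sqrt (∑ i ∈ F, ‖Φ i - φ i‖ ^ 2) * Real.sqrt (∑ i ∈ F, ‖Γ i - γ i‖ ^ 2) -
        ∑ i ∈ F, ‖(Φ i + φ i) / 2 - (⟪e i, x⟫ : 𝕂)‖ * ‖(Γ i + γ i) / 2 - (⟪e i, y⟫ : 𝕂)‖ := by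
  classical
  set a : I → 𝕂 := fun i => ⟪e i, x⟫ with ha
  set c : I → 𝕂 := fun i => ⟪e i, y⟫ with hc
  -- expansion helpers
  have h1 : ∀ (u : I → 𝕂) (w : E), (⟪∑ i ∈ F, u i • e i, w⟫ : 𝕂) =
      ∑ i ∈ F, (starRingEnd 𝕂) (u i) * ⟪e i, w⟫ := by
    intro u w; rw [sum_inner]; simp [inner_smul_left]
  have h2 : ∀ (u : I → 𝕂) (w : E), (⟪w, ∑ i ∈ F, u i • e i⟫ : 𝕂) =
      ∑ i ∈ F, u i * ⟪w, e i⟫ := by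
    intro u w; rw [inner_sum]; simp [inner_smul_right]
  have h3 : ∀ u v : I → 𝕂, (⟪∑ i ∈ F, u i • e i, ∑ j ∈ F, v j • e j⟫ : 𝕂) =
      ∑ i ∈ F, (starRingEnd 𝕂) (u i) * v i := by
    intro u v
    rw [h1]
    refine Finset.sum_congr rfl fun i hi => ?_
    rw [h2]
    have : ∑ j ∈ F, v j * (⟪e i, e j⟫ : 𝕂) = ∑ j ∈ F, (if i = j then v j else 0) := by
      refine Finset.sum_congr rfl fun j hj => ?_
      rw [he i hi j hj]
      split <;> simp
    rw [this, Finset.sum_ite_eq F i v, if_pos hi, mul_comm]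
  -- generic expansion of the hypothesis form
  have hexp : ∀ (u v : I → 𝕂) (w : E),
      re (⟪w - ∑ i ∈ F, u i • e i, (∑ i ∈ F, v i • e i) - w⟫ : 𝕂) =
        (∑ i ∈ F, (re (v i * (starRingEnd 𝕂) ⟪e i, w⟫) +
          re ((starRingEnd 𝕂) (u i) * ⟪e i, w⟫) -
          re ((starRingEnd 𝕂) (u i) * v i))) - ‖w‖ ^ 2 := by
    intro u v w
    rw [inner_sub_left, inner_sub_right, inner_sub_right, h2, h3, h1]
    have hw : (⟪w, w⟫ : 𝕂) = ((‖w‖ : 𝕂)) ^ 2 := inner_self_eq_norm_sq_to_K w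
    have hwre : re ((⟪w, w⟫ : 𝕂)) = ‖w‖ ^ 2 := inner_self_eq_norm_sq w
    have hvre : ∀ i ∈ F, re ((v i : 𝕂) * ⟪w, e i⟫) = re (v i * (starRingEnd 𝕂) ⟪e i, w⟫) := by
      intro i hi; rw [← inner_conj_symm w (e i)]
    simp only [map_sub, map_sum, hwre]
    rw [Finset.sum_congr rfl hvre]
    simp only [Finset.sum_sub_distrib, Finset.sum_add_distrib]
    ring
  -- residuals
  set rx : E := x - ∑ i ∈ F, a i • e i with hrx
  set ry : E := y - ∑ i ∈ F, c i • e i with hry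
  have hnormres : ∀ (w : E) (u : I → 𝕂), (∀ i ∈ F, (⟪e i, w⟫ : 𝕂) = u i) →
      ‖w - ∑ i ∈ F, u i • e i‖ ^ 2 = ‖w‖ ^ 2 - ∑ i ∈ F, ‖u i‖ ^ 2 := by
    intro w u hu
    rw [← inner_self_eq_norm_sq (𝕜 := 𝕂)]
    rw [inner_sub_left, inner_sub_right, inner_sub_right, h2, h3, h1]
    have hwre : re ((⟪w, w⟫ : 𝕂)) = ‖w‖ ^ 2 := inner_self_eq_norm_sq w
    simp only [map_sub, map_sum, hwre]
    have e1 : ∀ i ∈ F, re ((u i : 𝕂) * ⟪w, e i⟫) = ‖u i‖ ^ 2 := by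
      intro i hi
      rw [← inner_conj_symm w (e i), hu i hi, RCLike.mul_conj, ← RCLike.ofReal_pow,
        RCLike.ofReal_re]
    have e2 : ∀ i ∈ F, re ((starRingEnd 𝕂) (u i) * ⟪e i, w⟫) = ‖u i‖ ^ 2 := by
      intro i hi
      rw [hu i hi, RCLike.conj_mul, ← RCLike.ofReal_pow, RCLike.ofReal_re]
    have e3 : ∀ i ∈ F, re ((starRingEnd 𝕂) (u i) * u i) = ‖u i‖ ^ 2 := by
      intro i _
      rw [RCLike.conj_mul, ← RCLike.ofReal_pow, RCLike.ofReal_re]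
    rw [Finset.sum_congr rfl e1, Finset.sum_congr rfl e2, Finset.sum_congr rfl e3]
    ring
  have hrx2 : ‖rx‖ ^ 2 = ‖x‖ ^ 2 - ∑ i ∈ F, ‖a i‖ ^ 2 :=
    hnormres x a fun i _ => rfl
  have hry2 : ‖ry‖ ^ 2 = ‖y‖ ^ 2 - ∑ i ∈ F, ‖c i‖ ^ 2 :=
    hnormres y c fun i _ => rfl
  -- key bounds
  have keyx : ‖rx‖ ^ 2 ≤ ∑ i ∈ F, ((1/4) * ‖Φ i - φ i‖ ^ 2 - ‖(Φ i + φ i)/2 - a i‖ ^ 2) := by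
    rw [hexp φ Φ x] at hx
    rw [hrx2]
    have : ∑ i ∈ F, ((1/4) * ‖Φ i - φ i‖ ^ 2 - ‖(Φ i + φ i)/2 - a i‖ ^ 2) =
        ∑ i ∈ F, ((re (Φ i * (starRingEnd 𝕂) (a i)) + re ((starRingEnd 𝕂) (φ i) * a i) -
          re ((starRingEnd 𝕂) (φ i) * Φ i)) - ‖a i‖ ^ 2) := by
      refine Finset.sum_congr rfl fun i _ => ?_
      rw [← scalar_id (Φ i) (φ i) (a i)]
    rw [this, Finset.sum_sub_distrib]
    linarith
  have keyy : ‖ry‖ ^ 2 ≤ ∑ i ∈ F, ((1/4) * ‖Γ i - γ i‖ ^ 2 - ‖(Γ i + γ i)/2 - c i‖ ^ 2) := by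
    rw [hexp γ Γ y] at hy
    rw [hry2]
    have : ∑ i ∈ F, ((1/4) * ‖Γ i - γ i‖ ^ 2 - ‖(Γ i + γ i)/2 - c i‖ ^ 2) =
        ∑ i ∈ F, ((re (Γ i * (starRingEnd 𝕂) (c i)) + re ((starRingEnd 𝕂) (γ i) * c i) -
          re ((starRingEnd 𝕂) (γ i) * Γ i)) - ‖c i‖ ^ 2) := by
      refine Finset.sum_congr rfl fun i _ => ?_
      rw [← scalar_id (Γ i) (γ i) (c i)]
    rw [this, Finset.sum_sub_distrib]
    linarith
  -- LHS identity
  have hlhs : (⟪y, x⟫ : 𝕂) - ∑ i ∈ F, a i * (⟪y, e i⟫ : 𝕂) = ⟪ry, rx⟫ := by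
    rw [hry, hrx, inner_sub_left, inner_sub_right, inner_sub_right, h2, h3, h1]
    have hz : ∑ i ∈ F, (starRingEnd 𝕂) (c i) * (⟪e i, x⟫ : 𝕂) =
        ∑ i ∈ F, (starRingEnd 𝕂) (c i) * a i := rfl
    rw [hz]
    ring
  -- real arithmetic
  obtain ⟨A, hA⟩ : ∃ A : ℝ, A = ∑ i ∈ F, (1/4) * ‖Φ i - φ i‖ ^ 2 := ⟨_, rfl⟩
  obtain ⟨B, hB⟩ : ∃ B : ℝ, B = ∑ i ∈ F, ‖(Φ i + φ i)/2 - a i‖ ^ 2 := ⟨_, rfl⟩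
  obtain ⟨C, hC⟩ : ∃ C : ℝ, C = ∑ i ∈ F, (1/4) * ‖Γ i - γ i‖ ^ 2 := ⟨_, rfl⟩
  obtain ⟨D, hD⟩ : ∃ D : ℝ, D = ∑ i ∈ F, ‖(Γ i + γ i)/2 - c i‖ ^ 2 := ⟨_, rfl⟩
  have keyx' : ‖rx‖ ^ 2 ≤ A - B := by
    rw [hA, hB, ← Finset.sum_sub_distrib]; exact keyx
  have keyy' : ‖ry‖ ^ 2 ≤ C - D := by
    rw [hC, hD, ← Finset.sum_sub_distrib]; exact keyy
  have hA0 : 0 ≤ A := hA ▸ Finset.sum_nonneg fun i _ => by positivity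
  have hB0 : 0 ≤ B := hB ▸ Finset.sum_nonneg fun i _ => by positivity
  have hC0 : 0 ≤ C := hC ▸ Finset.sum_nonneg fun i _ => by positivity
  have hD0 : 0 ≤ D := hD ▸ Finset.sum_nonneg fun i _ => by positivity
  have hBA : B ≤ A := by nlinarith [sq_nonneg ‖rx‖]
  have hDC : D ≤ C := by nlinarith [sq_nonneg ‖ry‖]
  have hx1 : ‖rx‖ ≤ Real.sqrt (A - B) := Real.le_sqrt_of_sq_le keyx'
  have hy1 : ‖ry‖ ≤ Real.sqrt (C - D) := Real.le_sqrt_of_sq_le keyy'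
  have hsq := sqrt_step hA0 hB0 hC0 hD0 hBA hDC
  have hcs : ∑ i ∈ F, ‖(Φ i + φ i)/2 - a i‖ * ‖(Γ i + γ i)/2 - c i‖ ≤
      Real.sqrt B * Real.sqrt D := by
    rw [hB, hD]
    exact Real.sum_mul_le_sqrt_mul_sqrt F _ _
  have hAC : Real.sqrt A * Real.sqrt C =
      (1/4) * Real.sqrt (∑ i ∈ F, ‖Φ i - φ i‖ ^ 2) * Real.sqrt (∑ i ∈ F, ‖Γ i - γ i‖ ^ 2) := by
    rw [hA, hC, ← Finset.mul_sum, ← Finset.mul_sum,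
      Real.sqrt_mul (by norm_num : (0:ℝ) ≤ 1/4), Real.sqrt_mul (by norm_num : (0:ℝ) ≤ 1/4),
      show Real.sqrt (1/4) = 1/2 by
        rw [show (1/4:ℝ) = (1/2)^2 by norm_num, Real.sqrt_sq (by norm_num)]]
    ring
  calc ‖(⟪y, x⟫ : 𝕂) - ∑ i ∈ F, (⟪e i, x⟫ : 𝕂) * (⟪y, e i⟫ : 𝕂)‖
      = ‖(⟪ry, rx⟫ : 𝕂)‖ := by rw [← hlhs]
    _ ≤ ‖ry‖ * ‖rx‖ := norm_inner_le_norm (𝕜 := 𝕂) ry rx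
    _ ≤ Real.sqrt (C - D) * Real.sqrt (A - B) :=
        mul_le_mul hy1 hx1 (norm_nonneg _) (Real.sqrt_nonneg _)
    _ = Real.sqrt (A - B) * Real.sqrt (C - D) := mul_comm _ _
    _ ≤ Real.sqrt A * Real.sqrt C - Real.sqrt B * Real.sqrt D := hsq
    _ ≤ Real.sqrt A * Real.sqrt C -
        ∑ i ∈ F, ‖(Φ i + φ i)/2 - a i‖ * ‖(Γ i + γ i)/2 - c i‖ := by linarith
    _ = (1/4) * Real.sqrt (∑ i ∈ F, ‖Φ i - φ i‖ ^ 2) * Real.sqrt (∑ i ∈ F, ‖Γ i - γ i‖ ^ 2) -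
        ∑ i ∈ F, ‖(Φ i + φ i)/2 - (⟪e i, x⟫ : 𝕂)‖ * ‖(Γ i + γ i)/2 - (⟪e i, y⟫ : 𝕂)‖ := by
        rw [hAC]

theorem stmt16 (μ : Measure Ω) (ρ : Ω → ℝ) (hρ : ∀ s, 0 ≤ ρ s) (hρm : Measurable ρ)
    (fi : I → Ω → 𝕂) (hfim : ∀ i, AEStronglyMeasurable (fi i) μ)
    (hfi2 : ∀ i, Integrable (fun s => ρ s * ‖fi i s‖ ^ 2) μ)
    (horth : ∀ i j, ∫ s, (ρ s : 𝕂) * (fi i s * (starRingEnd 𝕂) (fi j s)) ∂μ =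
      if i = j then 1 else 0)
    (F : Finset I) (φ Φ γ Γ : I → 𝕂)
    (f g : Ω → 𝕂) (hfm : AEStronglyMeasurable f μ) (hgm : AEStronglyMeasurable g μ)
    (hf2 : Integrable (fun s => ρ s * ‖f s‖ ^ 2) μ)
    (hg2 : Integrable (fun s => ρ s * ‖g s‖ ^ 2) μ)
    (hx : 0 ≤ ∫ s, ρ s * re ((∑ i ∈ F, Φ i * fi i s - f s) *
        ((starRingEnd 𝕂) (f s) - ∑ i ∈ F, (starRingEnd 𝕂) (φ i) * (starRingEnd 𝕂) (fi i s))) ∂μ)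
    (hy : 0 ≤ ∫ s, ρ s * re ((∑ i ∈ F, Γ i * fi i s - g s) *
        ((starRingEnd 𝕂) (g s) - ∑ i ∈ F, (starRingEnd 𝕂) (γ i) * (starRingEnd 𝕂) (fi i s))) ∂μ) :
    ‖(∫ s, (ρ s : 𝕂) * (f s * (starRingEnd 𝕂) (g s)) ∂μ) -
        ∑ i ∈ F, (∫ s, (ρ s : 𝕂) * (f s * (starRingEnd 𝕂) (fi i s)) ∂μ) *
          (∫ s, (ρ s : 𝕂) * (fi i s * (starRingEnd 𝕂) (g s)) ∂μ)‖ ≤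
      (1 / 4) * Real.sqrt (∑ i ∈ F, ‖Φ i - φ i‖ ^ 2) *
          Real.sqrt (∑ i ∈ F, ‖Γ i - γ i‖ ^ 2) -
        ∑ i ∈ F, ‖(Φ i + φ i) / 2 - ∫ s, (ρ s : 𝕂) * (f s * (starRingEnd 𝕂) (fi i s)) ∂μ‖ *
          ‖(Γ i + γ i) / 2 - ∫ s, (ρ s : 𝕂) * (g s * (starRingEnd 𝕂) (fi i s)) ∂μ‖ ∧
    (1 / 4) * Real.sqrt (∑ i ∈ F, ‖Φ i - φ i‖ ^ 2) *
          Real.sqrt (∑ i ∈ F, ‖Γ i - γ i‖ ^ 2) -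
        ∑ i ∈ F, ‖(Φ i + φ i) / 2 - ∫ s, (ρ s : 𝕂) * (f s * (starRingEnd 𝕂) (fi i s)) ∂μ‖ *
          ‖(Γ i + γ i) / 2 - ∫ s, (ρ s : 𝕂) * (g s * (starRingEnd 𝕂) (fi i s)) ∂μ‖ ≤
      (1 / 4) * Real.sqrt (∑ i ∈ F, ‖Φ i - φ i‖ ^ 2) *
          Real.sqrt (∑ i ∈ F, ‖Γ i - γ i‖ ^ 2) := by
  classical
  have hsecond : (1 / 4) * Real.sqrt (∑ i ∈ F, ‖Φ i - φ i‖ ^ 2) *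
          Real.sqrt (∑ i ∈ F, ‖Γ i - γ i‖ ^ 2) -
        ∑ i ∈ F, ‖(Φ i + φ i) / 2 - ∫ s, (ρ s : 𝕂) * (f s * (starRingEnd 𝕂) (fi i s)) ∂μ‖ *
          ‖(Γ i + γ i) / 2 - ∫ s, (ρ s : 𝕂) * (g s * (starRingEnd 𝕂) (fi i s)) ∂μ‖ ≤
      (1 / 4) * Real.sqrt (∑ i ∈ F, ‖Φ i - φ i‖ ^ 2) *
          Real.sqrt (∑ i ∈ F, ‖Γ i - γ i‖ ^ 2) := by
    have h0 : (0:ℝ) ≤ ∑ i ∈ F,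
        ‖(Φ i + φ i) / 2 - ∫ s, (ρ s : 𝕂) * (f s * (starRingEnd 𝕂) (fi i s)) ∂μ‖ *
        ‖(Γ i + γ i) / 2 - ∫ s, (ρ s : 𝕂) * (g s * (starRingEnd 𝕂) (fi i s)) ∂μ‖ :=
      Finset.sum_nonneg fun i _ => mul_nonneg (norm_nonneg _) (norm_nonneg _)
    linarith
  refine ⟨?_, hsecond⟩
  -- setup the weighted measure
  set ν : Measure Ω := μ.withDensity (fun s => ((ρ s).toNNReal : ENNReal)) with hν
  have hρm' : Measurable fun s => (ρ s).toNNReal := hρm.real_toNNReal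
  have hint : ∀ (h : Ω → 𝕂), ∫ s, h s ∂ν = ∫ s, (ρ s : 𝕂) * h s ∂μ := by
    intro h
    rw [hν, integral_withDensity_eq_integral_smul hρm']
    refine integral_congr_ae (Filter.Eventually.of_forall fun s => ?_)
    simp only [NNReal.smul_def, Real.coe_toNNReal _ (hρ s), RCLike.real_smul_eq_coe_mul]
  -- membership in L²(ν)
  have hmem : ∀ (h : Ω → 𝕂), AEStronglyMeasurable h μ →
      Integrable (fun s => ρ s * ‖h s‖ ^ 2) μ → MemLp h 2 ν := by
    intro h hm hi
    have hm' : AEStronglyMeasurable h ν := hm.mono_ac (withDensity_absolutelyContinuous μ _)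
    rw [memLp_two_iff_integrable_sq_norm hm', hν,
      integrable_withDensity_iff_integrable_smul hρm']
    refine hi.congr (Filter.Eventually.of_forall fun s => ?_)
    simp only [NNReal.smul_def, Real.coe_toNNReal _ (hρ s), smul_eq_mul]
  have hF : MemLp f 2 ν := hmem f hfm hf2
  have hG : MemLp g 2 ν := hmem g hgm hg2
  have hEi : ∀ i, MemLp (fi i) 2 ν := fun i => hmem (fi i) (hfim i) (hfi2 i)
  -- key inner product identity
  have key : ∀ (u v : Ω → 𝕂) (hu : MemLp u 2 ν) (hv : MemLp v 2 ν),
      (⟪hv.toLp v, hu.toLp u⟫ : 𝕂) = ∫ s, (ρ s : 𝕂) * (u s * (starRingEnd 𝕂) (v s)) ∂μ := by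
    intro u v hu hv
    rw [MeasureTheory.L2.inner_def, ← hint fun s => u s * (starRingEnd 𝕂) (v s)]
    refine integral_congr_ae ?_
    filter_upwards [hu.coeFn_toLp, hv.coeFn_toLp] with s hsu hsv
    rw [RCLike.inner_apply, hsu, hsv, mul_comm]
  -- integrability of products against μ
  have keyInt : ∀ (u v : Ω → 𝕂) (hu : MemLp u 2 ν) (hv : MemLp v 2 ν),
      Integrable (fun s => (ρ s : 𝕂) * (u s * (starRingEnd 𝕂) (v s))) μ := by
    intro u v hu hv
    have h1 : Integrable (fun a => (⟪(hv.toLp v) a, (hu.toLp u) a⟫ : 𝕂)) ν :=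
      MeasureTheory.L2.integrable_inner _ _
    have h2 : Integrable (fun s => u s * (starRingEnd 𝕂) (v s)) ν := by
      refine h1.congr ?_
      filter_upwards [hu.coeFn_toLp, hv.coeFn_toLp] with s hsu hsv
      rw [RCLike.inner_apply, hsu, hsv, mul_comm]
    rw [hν, integrable_withDensity_iff_integrable_smul hρm'] at h2
    refine h2.congr (Filter.Eventually.of_forall fun s => ?_)
    simp only [NNReal.smul_def, Real.coe_toNNReal _ (hρ s), RCLike.real_smul_eq_coe_mul]
  -- Lp elements
  set X := hF.toLp f with hX
  set Y := hG.toLp g with hY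
  set EE : I → _ := fun i => (hEi i).toLp (fi i) with hEE
  -- orthonormality
  have he : ∀ i ∈ F, ∀ j ∈ F, (⟪EE i, EE j⟫ : 𝕂) = if i = j then 1 else 0 := by
    intro i _ j _
    rw [hEE]
    rw [key (fi j) (fi i) (hEi j) (hEi i), horth j i]
    simp [eq_comm]
  -- sums of toLp
  have toLp_sum : ∀ (G : Finset I) (h : I → Ω → 𝕂) (hh : ∀ i, MemLp (h i) 2 ν)
      (hs : MemLp (fun s => ∑ i ∈ G, h i s) 2 ν),
      hs.toLp _ = ∑ i ∈ G, (hh i).toLp (h i) := by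
    intro G
    induction G using Finset.induction_on with
    | empty =>
      intro h hh hs
      simp only [Finset.sum_empty]
      exact MemLp.toLp_zero _
    | @insert a G hnot ih =>
      intro h hh hs
      have hsum : MemLp (fun s => ∑ i ∈ G, h i s) 2 ν := memLp_finset_sum G fun i _ => hh i
      have h1 : (fun s => ∑ i ∈ insert a G, h i s) =ᵐ[ν]
          (h a + fun s => ∑ i ∈ G, h i s) := by
        refine Filter.Eventually.of_forall fun s => ?_
        simp [Finset.sum_insert hnot]
      rw [MemLp.toLp_congr hs ((hh a).add hsum) h1, MemLp.toLp_add (hh a) hsum,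
        ih h hh hsum, Finset.sum_insert hnot]
  -- combination identity
  have comboX : ∀ (w : Ω → 𝕂) (hw : MemLp w 2 ν) (δ : I → 𝕂)
      (hδ : MemLp (fun s => w s - ∑ i ∈ F, δ i * fi i s) 2 ν),
      hδ.toLp _ = hw.toLp w - ∑ i ∈ F, δ i • EE i := by
    intro w hw δ hδ
    have hsm : ∀ i : I, MemLp (fun s => δ i * fi i s) 2 ν := fun i =>
      (hEi i).const_smul (δ i)
    have hsum : MemLp (fun s => ∑ i ∈ F, δ i * fi i s) 2 ν :=
      memLp_finset_sum F fun i _ => hsm i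
    have h1 : (fun s => w s - ∑ i ∈ F, δ i * fi i s) =ᵐ[ν]
        (w - fun s => ∑ i ∈ F, δ i * fi i s) := Filter.Eventually.of_forall fun s => rfl
    rw [MemLp.toLp_congr hδ (hw.sub hsum) h1, MemLp.toLp_sub hw hsum,
      toLp_sum F _ hsm hsum]
    exact congrArg (MemLp.toLp w hw - ·)
      (Finset.sum_congr rfl fun i _ => MemLp.toLp_const_smul (δ i) (hEi i))

  -- hypothesis transfer
  have hyp_transfer : ∀ (w : Ω → 𝕂) (hw : MemLp w 2 ν) (δ Δ : I → 𝕂),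
      (0 ≤ ∫ s, ρ s * re ((∑ i ∈ F, Δ i * fi i s - w s) *
        ((starRingEnd 𝕂) (w s) - ∑ i ∈ F, (starRingEnd 𝕂) (δ i) * (starRingEnd 𝕂) (fi i s))) ∂μ) →
      0 ≤ re (⟪hw.toLp w - ∑ i ∈ F, δ i • EE i,
          (∑ i ∈ F, Δ i • EE i) - hw.toLp w⟫ : 𝕂) := by
    intro w hw δ Δ h0
    have hsumΔ : MemLp (fun s => ∑ i ∈ F, Δ i * fi i s) 2 ν :=
      memLp_finset_sum F fun i _ => (hEi i).const_smul (Δ i)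
    have hu : MemLp (fun s => (∑ i ∈ F, Δ i * fi i s) - w s) 2 ν := hsumΔ.sub hw
    have hv : MemLp (fun s => w s - ∑ i ∈ F, Δ i * fi i s) 2 ν := hw.sub hsumΔ
    have hv' : MemLp (fun s => w s - ∑ i ∈ F, δ i * fi i s) 2 ν :=
      hw.sub (memLp_finset_sum F fun i _ => (hEi i).const_smul (δ i))
    have e_v : hv'.toLp _ = hw.toLp w - ∑ i ∈ F, δ i • EE i := comboX w hw δ hv'
    have e_u : hu.toLp _ = (∑ i ∈ F, Δ i • EE i) - hw.toLp w := by
      have hneg : (fun s => (∑ i ∈ F, Δ i * fi i s) - w s) =ᵐ[ν]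
          (-(fun s => w s - ∑ i ∈ F, Δ i * fi i s)) :=
        Filter.Eventually.of_forall fun s => by simp
      rw [MemLp.toLp_congr hu hv.neg hneg, MemLp.toLp_neg hv, comboX w hw Δ hv, neg_sub]
    rw [← e_v, ← e_u, key _ _ hu hv', ← integral_re (keyInt _ _ hu hv')]
    have heq : ∀ s, ρ s * re ((∑ i ∈ F, Δ i * fi i s - w s) *
        ((starRingEnd 𝕂) (w s) - ∑ i ∈ F, (starRingEnd 𝕂) (δ i) * (starRingEnd 𝕂) (fi i s))) =
        re ((ρ s : 𝕂) * (((∑ i ∈ F, Δ i * fi i s) - w s) *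
          (starRingEnd 𝕂) (w s - ∑ i ∈ F, δ i * fi i s))) := by
      intro s
      rw [RCLike.re_ofReal_mul]
      congr 2
      simp [map_sub, map_sum, map_mul]
    calc (0:ℝ) ≤ ∫ s, ρ s * re ((∑ i ∈ F, Δ i * fi i s - w s) *
          ((starRingEnd 𝕂) (w s) - ∑ i ∈ F, (starRingEnd 𝕂) (δ i) * (starRingEnd 𝕂) (fi i s))) ∂μ := h0
      _ = ∫ s, re ((ρ s : 𝕂) * (((∑ i ∈ F, Δ i * fi i s) - w s) *
          (starRingEnd 𝕂) (w s - ∑ i ∈ F, δ i * fi i s))) ∂μ :=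
        integral_congr_ae (Filter.Eventually.of_forall fun s => heq s)
  have hxT := hyp_transfer f hF φ Φ hx
  have hyT := hyp_transfer g hG γ Γ hy
  have main := gruss_abstract F EE he X Y φ Φ γ Γ hxT hyT
  have r1 : ∀ i : I, (⟪EE i, X⟫ : 𝕂) = ∫ s, (ρ s : 𝕂) * (f s * (starRingEnd 𝕂) (fi i s)) ∂μ :=
    fun i => key f (fi i) hF (hEi i)
  have r2 : ∀ i : I, (⟪Y, EE i⟫ : 𝕂) = ∫ s, (ρ s : 𝕂) * (fi i s * (starRingEnd 𝕂) (g s)) ∂μ :=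
    fun i => key (fi i) g (hEi i) hG
  have r3 : ∀ i : I, (⟪EE i, Y⟫ : 𝕂) = ∫ s, (ρ s : 𝕂) * (g s * (starRingEnd 𝕂) (fi i s)) ∂μ :=
    fun i => key g (fi i) hG (hEi i)
  have r0 : (⟪Y, X⟫ : 𝕂) = ∫ s, (ρ s : 𝕂) * (f s * (starRingEnd 𝕂) (g s)) ∂μ :=
    key f g hF hG
  simp only [r0, r1, r2, r3] at main
  exact main
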